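/- Let S : Set ℕ have infinite complement, and let w ∈ FreeGroup ℕ. Suppose that for every group automorphism f : FreeGroup ℕ ≃* FreeGroup ℕ satisfying f (FreeGroup.of i) = FreeGroup.of i for all i ∈ S, we have f w = w. Then w lies in the subgroup Subgroup.closure (FreeGroup.of '' S). -/

import Mathlib

namespace FreeGroupAux

open FreeGroup

lemma reduce_map {α β : Type*} [DecidableEq α] [DecidableEq β] {σ : α → β}
    (hσ : Function.Injective σ) (L : List (α × Bool)) :
    reduce (L.map fun x => (σ x.1, x.2)) = (reduce L).map fun x => (σ x.1, x.2) := by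
  induction L with
  | nil => simp
  | cons hd tl ih =>
    rw [List.map_cons, reduce.cons, reduce.cons, ih]
    cases h : reduce tl with
    | nil => simp
    | cons hd2 tl2 =>
      simp only [List.map_cons]
      by_cases hc : hd.1 = hd2.1 ∧ hd.2 = !hd2.2
      · rw [if_pos hc, if_pos ⟨congrArg σ hc.1, hc.2⟩]
      · rw [if_neg hc, if_neg (fun h => hc ⟨hσ h.1, h.2⟩)]
        simp

lemma toWord_freeGroupCongr (σ : ℕ ≃ ℕ) (w : FreeGroup ℕ) :
    ((freeGroupCongr σ) w).toWord = w.toWord.map fun x => (σ x.1, x.2) := by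
  have : (freeGroupCongr σ) w = FreeGroup.map σ w := rfl
  rw [this]
  conv_lhs => rw [← mk_toWord (x := w)]
  rw [map.mk, toWord_mk, reduce_map σ.injective, reduce_toWord]

lemma mem_closure_of_letters {S : Set ℕ} (L : List (ℕ × Bool)) (hL : ∀ x ∈ L, x.1 ∈ S) :
    FreeGroup.mk L ∈ Subgroup.closure (FreeGroup.of '' S) := by
  induction L with
  | nil => exact one_mem _
  | cons hd tl ih =>
    have : FreeGroup.mk (hd :: tl) = FreeGroup.mk [hd] * FreeGroup.mk tl := by
      rw [mul_mk]; rfl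
    rw [this]
    refine mul_mem ?_ (ih fun x hx => hL x (List.mem_cons_of_mem _ hx))
    have hhd : FreeGroup.of hd.1 ∈ Subgroup.closure (FreeGroup.of '' S) :=
      Subgroup.subset_closure ⟨hd.1, hL hd List.mem_cons_self, rfl⟩
    rcases hd with ⟨a, b⟩
    cases b
    · have : FreeGroup.mk [(a, false)] = (FreeGroup.of a)⁻¹ := by
        rw [show FreeGroup.of a = FreeGroup.mk [(a, true)] from rfl, inv_mk]; rfl
      rw [this]; exact inv_mem hhd
    · exact hhd

end FreeGroupAux

/-- An element of the free group of countably infinite rank fixed by every automorphism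
fixing each generator from a set `S` of generators (whose complement is infinite) lies in
the subgroup generated by the generators from `S` (used implicitly in the proof of the
noncommutativity Proposition, Section 2 of the paper). -/
theorem fixed_by_all_autos_mem_closure (S : Set ℕ) (hS : Sᶜ.Infinite) (w : FreeGroup ℕ)
    (hw : ∀ f : FreeGroup ℕ ≃* FreeGroup ℕ,
      (∀ i ∈ S, f (FreeGroup.of i) = FreeGroup.of i) → f w = w) :
    w ∈ Subgroup.closure (FreeGroup.of '' S) := by
  -- every letter of the reduced word of `w` lies in `S`
  have key : ∀ x ∈ w.toWord, x.1 ∈ S := by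
    intro x hx
    by_contra hxS
    -- pick a fresh letter k outside S and outside the letters of w
    have hfin : (↑(w.toWord.map Prod.fst).toFinset : Set ℕ).Finite := (Finset.finite_toSet _)
    obtain ⟨k, hkS, hkL⟩ := (hS.diff hfin).nonempty
    have hkx : k ≠ x.1 := by
      intro h
      exact hkL (by simpa [h] using List.mem_map_of_mem (f := Prod.fst) hx)
    -- the swap automorphism
    set σ : ℕ ≃ ℕ := Equiv.swap x.1 k with hσ
    have hfix : ∀ i ∈ S, (FreeGroup.freeGroupCongr σ) (FreeGroup.of i) = FreeGroup.of i := by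
      intro i hi
      have h1 : i ≠ x.1 := fun h => hxS (h ▸ hi)
      have h2 : i ≠ k := fun h => hkS (h ▸ hi)
      simp [hσ, Equiv.swap_apply_of_ne_of_ne h1 h2]
    have hww := hw _ hfix
    have htw := FreeGroupAux.toWord_freeGroupCongr σ w
    rw [hww] at htw
    have : ((σ x.1, x.2) : ℕ × Bool) ∈ w.toWord := by
      rw [htw]
      exact List.mem_map_of_mem (f := fun x : ℕ × Bool => (σ x.1, x.2)) hx
    rw [hσ, Equiv.swap_apply_left] at this
    exact hkL (by simpa using List.mem_map_of_mem (f := Prod.fst) this)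
  have := FreeGroupAux.mem_closure_of_letters (S := S) w.toWord key
  rwa [FreeGroup.mk_toWord] at this
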